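/- arXiv:2007.03336 — 4 statements merged into one kernel-verified Lean document; each statement's English description precedes it below -/
import Mathlib

section
/- Let D ≥ 1 and let φ_1, …, φ_D ≥ 2 be integers, set M = Σ_{i=1}^D φ_i, and fix a configuration opt in the space Θ = Π_{i=1}^D {1, …, φ_i}. Let c > 0 be a real number and let (X_t)_{t≥0} be any stochastic process with values in Θ such that X_0 is uniformly distributed on Θ and almost surely the L1 distance between X_{t+1} and X_t is at most c for every t. Let T = inf{t ≥ 0 : X_t = opt} be the first hitting time of opt. Then E[T] ≥ M/(8c). -/
open MeasureTheory

lemma coord_sum_lb (n o : ℕ) (hn : 2 ≤ n) (ho1 : 1 ≤ o) (ho2 : o ≤ n) :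
    (n : ℝ)^2 / 8 ≤ ∑ x ∈ Finset.Icc 1 n, |(x : ℝ) - (o : ℝ)| := by
  have hIcc : Finset.Icc 1 n = Finset.Ioc 0 n := by rw [← Finset.Icc_add_one_left_eq_Ioc]; rfl
  have hgauss : ∀ m : ℕ, ∑ x ∈ Finset.Ioc 0 m, (x : ℝ) = m * (m + 1) / 2 := by
    intro m
    induction m with
    | zero => simp
    | succ k ih =>
      rw [Finset.sum_Ioc_succ_top (Nat.zero_le _), ih]
      push_cast; ring
  rw [hIcc, ← Finset.sum_Ioc_consecutive _ (Nat.zero_le o) ho2]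
  have h1 : ∑ x ∈ Finset.Ioc 0 o, |(x : ℝ) - (o : ℝ)|
      = ∑ x ∈ Finset.Ioc 0 o, ((o : ℝ) - (x : ℝ)) := by
    refine Finset.sum_congr rfl fun x hx => ?_
    have hxo : x ≤ o := (Finset.mem_Ioc.mp hx).2
    rw [abs_of_nonpos (sub_nonpos.mpr (by exact_mod_cast hxo))]
    ring
  have h2 : ∑ x ∈ Finset.Ioc o n, |(x : ℝ) - (o : ℝ)|
      = ∑ x ∈ Finset.Ioc o n, ((x : ℝ) - (o : ℝ)) := by
    refine Finset.sum_congr rfl fun x hx => ?_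
    have hxo : o ≤ x := le_of_lt (Finset.mem_Ioc.mp hx).1
    exact abs_of_nonneg (sub_nonneg.mpr (by exact_mod_cast hxo))
  have hA : ∑ x ∈ Finset.Ioc 0 o, ((o : ℝ) - (x : ℝ))
      = o * o - o * (o + 1) / 2 := by
    rw [Finset.sum_sub_distrib, Finset.sum_const, hgauss, Nat.card_Ioc]
    simp [nsmul_eq_mul]
  have hB : ∑ x ∈ Finset.Ioc o n, ((x : ℝ) - (o : ℝ))
      = (n * (n + 1) / 2 - o * (o + 1) / 2) - (n - o) * o := by
    have hsplit : (∑ x ∈ Finset.Ioc 0 o, (x:ℝ)) + ∑ x ∈ Finset.Ioc o n, (x:ℝ)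
        = ∑ x ∈ Finset.Ioc 0 n, (x:ℝ) :=
      Finset.sum_Ioc_consecutive _ (Nat.zero_le o) ho2
    rw [Finset.sum_sub_distrib, Finset.sum_const, Nat.card_Ioc]
    have : ∑ x ∈ Finset.Ioc o n, (x:ℝ) = n * (n + 1) / 2 - o * (o + 1) / 2 := by
      rw [hgauss, hgauss] at hsplit; linarith
    rw [this, nsmul_eq_mul, Nat.cast_sub ho2]
  rw [h1, h2, hA, hB]
  have hnr : (2 : ℝ) ≤ n := by exact_mod_cast hn
  nlinarith [sq_nonneg (2 * (o : ℝ) - n - 1)]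

lemma coord_extract {D : ℕ} (φ : Fin D → ℕ) (i : Fin D) (f : ℕ → ℝ) :
    ∑ θ ∈ Fintype.piFinset (fun j => Finset.Icc 1 (φ j)), f (θ i)
      = (∏ j ∈ Finset.univ.erase i, (φ j : ℝ)) * ∑ x ∈ Finset.Icc 1 (φ i), f x := by
  classical
  have key := Finset.prod_univ_sum (fun j => Finset.Icc 1 (φ j))
    (fun j x => if j = i then f x else 1)
  have hR : ∑ θ ∈ Fintype.piFinset (fun j => Finset.Icc 1 (φ j)),
      ∏ j, (if j = i then f (θ j) else 1)
      = ∑ θ ∈ Fintype.piFinset (fun j => Finset.Icc 1 (φ j)), f (θ i) := by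
    refine Finset.sum_congr rfl fun θ _ => ?_
    rw [Finset.prod_ite_eq' Finset.univ i (fun j => f (θ j))]
    simp
  have hL : (∏ j, ∑ x ∈ Finset.Icc 1 (φ j), (if j = i then f x else 1))
      = (∑ x ∈ Finset.Icc 1 (φ i), f x) * ∏ j ∈ Finset.univ.erase i, (φ j : ℝ) := by
    rw [← Finset.mul_prod_erase _ _ (Finset.mem_univ i)]
    congr 1
    · simp
    · refine Finset.prod_congr rfl fun j hj => ?_
      have hji : j ≠ i := Finset.ne_of_mem_erase hj
      simp [hji, Nat.card_Icc]
  rw [hL, hR] at key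
  rw [← key, mul_comm]

/-- Theorem 1 of the paper. For any stochastic process `(X_t)` with
values in the configuration space `Θ = Π {1, …, φ_i}`, starting from the uniform
distribution on `Θ` and whose steps move by `L1` distance at most `c` almost surely,
the expected first hitting time of a fixed configuration `opt` is at least `M/(8c)`,
where `M = ∑ φ_i`.  The hitting time is the infimum in `ℝ≥0∞` (so `∞` if `opt` is
never hit), and its expectation is the lower Lebesgue integral. -/
theorem hitting_time_lower_bound_local_mutation
    {Ω : Type*} [MeasurableSpace Ω] (μ : Measure Ω) [IsProbabilityMeasure μ]
    (D : ℕ) (hD : 1 ≤ D) (φ : Fin D → ℕ) (hφ : ∀ i, 2 ≤ φ i)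
    (opt : Fin D → ℕ) (hopt : opt ∈ Fintype.piFinset fun i => Finset.Icc 1 (φ i))
    (c : ℝ) (hc : 0 < c)
    (X : ℕ → Ω → (Fin D → ℕ))
    (hmeas : ∀ t, Measurable (X t))
    (hrange : ∀ᵐ ω ∂μ, ∀ t, X t ω ∈ Fintype.piFinset fun i => Finset.Icc 1 (φ i))
    (hX0 : ∀ θ ∈ Fintype.piFinset fun i => Finset.Icc 1 (φ i),
      μ {ω | X 0 ω = θ} = 1 / ∏ i, (φ i : ENNReal))
    (hstep : ∀ᵐ ω ∂μ, ∀ t, ∑ i, |(X (t + 1) ω i : ℝ) - (X t ω i : ℝ)| ≤ c) :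
    ENNReal.ofReal (((∑ i, φ i : ℕ) : ℝ) / (8 * c)) ≤
      ∫⁻ ω, (⨅ (t : ℕ) (_ : X t ω = opt), (t : ENNReal)) ∂μ := by
  classical
  set S := Fintype.piFinset fun i => Finset.Icc 1 (φ i) with hS
  set d : (Fin D → ℕ) → ℝ := fun θ => ∑ i, |(θ i : ℝ) - (opt i : ℝ)| with hd
  have hd_nonneg : ∀ θ, 0 ≤ d θ := fun θ =>
    Finset.sum_nonneg fun i _ => abs_nonneg _
  -- a.e. pointwise bound on the hitting time
  have key : ∀ᵐ ω ∂μ, ENNReal.ofReal (d (X 0 ω) / c)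
      ≤ ⨅ (t : ℕ) (_ : X t ω = opt), (t : ENNReal) := by
    filter_upwards [hstep] with ω hω
    refine le_iInf fun t => le_iInf fun ht => ?_
    have hle : ∀ s : ℕ, d (X 0 ω) ≤ s * c + d (X s ω) := by
      intro s
      induction s with
      | zero => simp
      | succ s ih =>
        have tri : d (X s ω) ≤ (∑ i, |(X (s+1) ω i : ℝ) - (X s ω i : ℝ)|)
            + d (X (s+1) ω) := by
          rw [hd, ← Finset.sum_add_distrib]
          refine Finset.sum_le_sum fun i _ => ?_
          calc |(X s ω i : ℝ) - (opt i : ℝ)|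
              = |((X s ω i : ℝ) - (X (s+1) ω i : ℝ))
                + ((X (s+1) ω i : ℝ) - (opt i : ℝ))| := by ring_nf
            _ ≤ |(X s ω i : ℝ) - (X (s+1) ω i : ℝ)|
                + |(X (s+1) ω i : ℝ) - (opt i : ℝ)| := abs_add_le _ _
            _ ≤ _ := by rw [abs_sub_comm]
        have := hω s
        push_cast
        linarith
    have h0 : d (X 0 ω) ≤ t * c := by
      have := hle t
      rw [ht] at this
      have hzero : d opt = 0 := by simp [hd]
      linarith [this, hzero.le]
    have : d (X 0 ω) / c ≤ (t : ℝ) := by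
      rw [div_le_iff₀ hc]; linarith [h0]
    calc ENNReal.ofReal (d (X 0 ω) / c) ≤ ENNReal.ofReal (t : ℝ) :=
          ENNReal.ofReal_le_ofReal this
      _ = (t : ENNReal) := ENNReal.ofReal_natCast t
  -- measurability and disjointness of the level sets of X 0
  have hmset : ∀ θ : Fin D → ℕ, MeasurableSet {ω | X 0 ω = θ} := by
    intro θ
    exact hmeas 0 (MeasurableSet.singleton θ)
  have hdisj : Set.PairwiseDisjoint (↑S) (fun θ => {ω | X 0 ω = θ}) := by
    intro θ1 _ θ2 _ hne
    refine Set.disjoint_left.mpr fun ω h1 h2 => hne ?_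
    rw [← h1, ← h2]
  -- the number of configurations
  set N : ℕ := ∏ i, φ i with hN
  have hNpos : 0 < N := Finset.prod_pos fun i _ => lt_of_lt_of_le two_pos (hφ i)
  have hNcast : (∏ i, (φ i : ENNReal)) = (N : ENNReal) := by
    rw [hN]; push_cast; rfl
  -- combinatorial lower bound
  have hcomb : ((∑ i, φ i : ℕ) : ℝ) * (N : ℝ) / 8 ≤ ∑ θ ∈ S, d θ := by
    have hswap : ∑ θ ∈ S, d θ = ∑ i, ∑ θ ∈ S, |(θ i : ℝ) - (opt i : ℝ)| := by
      rw [hd]; exact Finset.sum_comm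
    have hterm : ∀ i : Fin D, (φ i : ℝ) * (N : ℝ) / 8
        ≤ ∑ θ ∈ S, |(θ i : ℝ) - (opt i : ℝ)| := by
      intro i
      rw [hS, coord_extract φ i (fun x => |(x : ℝ) - (opt i : ℝ)|)]
      have hopti := Fintype.mem_piFinset.mp hopt i
      rw [Finset.mem_Icc] at hopti
      have h1 := coord_sum_lb (φ i) (opt i) (hφ i) hopti.1 hopti.2
      have h2 : (0:ℝ) ≤ ∏ j ∈ Finset.univ.erase i, (φ j : ℝ) :=
        Finset.prod_nonneg fun j _ => Nat.cast_nonneg _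
      have h3 : (N : ℝ) = (φ i : ℝ) * ∏ j ∈ Finset.univ.erase i, (φ j : ℝ) := by
        rw [hN]; push_cast
        exact (Finset.mul_prod_erase _ _ (Finset.mem_univ i)).symm
      rw [h3]
      nlinarith [mul_le_mul_of_nonneg_left h1 h2]
    rw [hswap]
    calc ((∑ i, φ i : ℕ) : ℝ) * (N : ℝ) / 8 = ∑ i, (φ i : ℝ) * (N : ℝ) / 8 := by
          push_cast
          rw [← Finset.sum_div, ← Finset.sum_mul]
      _ ≤ _ := Finset.sum_le_sum fun i _ => hterm i
  -- main chain
  calc ENNReal.ofReal (((∑ i, φ i : ℕ) : ℝ) / (8 * c))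
      ≤ ∑ θ ∈ S, ENNReal.ofReal (d θ / c) * μ {ω | X 0 ω = θ} := by
        have hμ : ∀ θ ∈ S, μ {ω | X 0 ω = θ} = ENNReal.ofReal ((N : ℝ)⁻¹) := by
          intro θ hθ
          rw [hX0 θ hθ, hNcast, one_div, ← ENNReal.ofReal_natCast N,
            ← ENNReal.ofReal_inv_of_pos (by exact_mod_cast hNpos)]
        have hsum_eq : ∑ θ ∈ S, ENNReal.ofReal (d θ / c) * μ {ω | X 0 ω = θ}
            = ENNReal.ofReal (∑ θ ∈ S, d θ / c * (N : ℝ)⁻¹) := by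
          rw [ENNReal.ofReal_sum_of_nonneg (fun θ _ => by positivity)]
          refine Finset.sum_congr rfl fun θ hθ => ?_
          rw [hμ θ hθ, ← ENNReal.ofReal_mul (by positivity)]
        rw [hsum_eq]
        refine ENNReal.ofReal_le_ofReal ?_
        have hsum : ∑ θ ∈ S, d θ / c * (N : ℝ)⁻¹ = (∑ θ ∈ S, d θ) / c * (N : ℝ)⁻¹ := by
          rw [← Finset.sum_mul, ← Finset.sum_div]
        have hNr : (0:ℝ) < (N:ℝ) := by exact_mod_cast hNpos
        rw [hsum, ← div_eq_mul_inv, div_div,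
          div_le_div_iff₀ (by positivity) (by positivity)]
        nlinarith [hcomb, hc, hNr]
      _ = ∑ θ ∈ S, ∫⁻ ω in {ω | X 0 ω = θ}, ENNReal.ofReal (d (X 0 ω) / c) ∂μ := by
        refine Finset.sum_congr rfl fun θ hθ => ?_
        rw [setLIntegral_congr_fun (hmset θ)
          (fun ⦃ω⦄ (hω : X 0 ω = θ) => by rw [hω]),
          setLIntegral_const]
      _ = ∫⁻ ω in ⋃ θ ∈ S, {ω | X 0 ω = θ}, ENNReal.ofReal (d (X 0 ω) / c) ∂μ :=
        (lintegral_biUnion_finset hdisj (fun θ _ => hmset θ) _).symm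
      _ ≤ ∫⁻ ω, ENNReal.ofReal (d (X 0 ω) / c) ∂μ := setLIntegral_le_lintegral _ _
      _ ≤ ∫⁻ ω, (⨅ (t : ℕ) (_ : X t ω = opt), (t : ENNReal)) ∂μ :=
        lintegral_mono_ae key
end

section
/- Let φ ≥ 2 be an integer and let H_{φ−1} = Σ_{k=1}^{φ−1} 1/k. Consider the harmonic distribution on {1, …, φ−1}, assigning probability 1/(s·H_{φ−1}) to each step size s. Let d, d* be integers and α ≥ 1 a real number with 1 ≤ d* ≤ d ≤ φ−1 and d ≤ α·d*. Then the probability that a harmonically distributed step size lies in the interval {d − ⌊d*/2⌋, …, d} is at least 1/(2α·H_{φ−1}). -/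
/-- Let `φ ≥ 2` and `H_{φ−1} = ∑_{k=1}^{φ−1} 1/k`.  Under the
harmonic distribution on `{1, …, φ−1}` (step size `s` has probability
`1/(s·H_{φ−1})`), for integers `1 ≤ d* ≤ d ≤ φ−1` and a real `α ≥ 1` with
`d ≤ α·d*`, the probability that the step size lies in `{d − ⌊d*/2⌋, …, d}` is
at least `1/(2α·H_{φ−1})`. -/
theorem harmonic_step_interval_probability (φ : ℕ) (hφ : 2 ≤ φ)
    (d dstar : ℕ) (h1 : 1 ≤ dstar) (h2 : dstar ≤ d) (h3 : d ≤ φ - 1)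
    (α : ℝ) (hα : 1 ≤ α) (hdα : (d : ℝ) ≤ α * (dstar : ℝ)) :
    1 / (2 * α * (∑ k ∈ Finset.Icc 1 (φ - 1), (1 : ℝ) / (k : ℝ))) ≤
      ∑ s ∈ Finset.Icc (d - dstar / 2) d,
        1 / ((s : ℝ) * (∑ k ∈ Finset.Icc 1 (φ - 1), (1 : ℝ) / (k : ℝ))) := by
  set H := ∑ k ∈ Finset.Icc 1 (φ - 1), (1 : ℝ) / (k : ℝ) with hH
  have hφ1 : 1 ≤ φ - 1 := by omega
  have hHpos : 0 < H := by
    apply Finset.sum_pos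
    · intro k hk
      rw [Finset.mem_Icc] at hk
      have : (0 : ℝ) < k := by exact_mod_cast hk.1
      positivity
    · exact ⟨1, Finset.mem_Icc.mpr ⟨le_refl 1, hφ1⟩⟩
  have hd1 : 1 ≤ d := le_trans h1 h2
  have hdpos : (0 : ℝ) < d := by exact_mod_cast hd1
  have hαpos : 0 < α := lt_of_lt_of_le one_pos hα
  have hcard : (Finset.Icc (d - dstar / 2) d).card = dstar / 2 + 1 := by
    rw [Nat.card_Icc]; omega
  have step1 : ((dstar / 2 + 1 : ℕ) : ℝ) * (1 / ((d : ℝ) * H)) ≤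
      ∑ s ∈ Finset.Icc (d - dstar / 2) d, 1 / ((s : ℝ) * H) := by
    rw [← hcard, ← nsmul_eq_mul]
    apply Finset.card_nsmul_le_sum
    intro s hs
    rw [Finset.mem_Icc] at hs
    have hs1 : 1 ≤ s := by omega
    have hsd : (s : ℝ) ≤ d := by exact_mod_cast hs.2
    have hspos : (0 : ℝ) < s := by exact_mod_cast hs1
    apply one_div_le_one_div_of_le (by positivity)
    exact mul_le_mul_of_nonneg_right hsd hHpos.le
  refine le_trans ?_ step1
  have hq : (dstar : ℝ) ≤ 2 * (dstar / 2 : ℕ) + 1 := by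
    have : dstar ≤ 2 * (dstar / 2) + 1 := by omega
    exact_mod_cast this
  have hkey : (d : ℝ) ≤ 2 * α * ((dstar / 2 + 1 : ℕ) : ℝ) := by
    push_cast
    nlinarith [hdα, hq, hαpos.le]
  rw [div_le_iff₀ (by positivity)]
  have heq : ((dstar / 2 + 1 : ℕ) : ℝ) * (1 / ((d : ℝ) * H)) * (2 * α * H) =
      (((dstar / 2 + 1 : ℕ) : ℝ) * (2 * α * H)) / ((d : ℝ) * H) := by ring
  rw [heq, le_div_iff₀ (by positivity), one_mul]
  nlinarith [mul_le_mul_of_nonneg_right hkey hHpos.le]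
end

section
/- Let φ ≥ 2 be an integer, let f : {1, …, φ} → ℝ be injective with minimizer x*, and consider the ParamHS Markov chain on {1, …, φ} induced by f. Let x ∈ {1, …, φ} be a state with |x − x*| ≥ 1, and let d* be an integer and α ≥ 1 a real number with 1 ≤ d* ≤ |x − x*| ≤ α·d*. Then, in one step of the chain from x, the probability that the mutation samples a point y with |y − x*| ≤ ⌊d*/2⌋ (i.e. that the sampled step size d yields a candidate set S containing such a point) is at least 1/(2α·H_{φ−1}). -/
/-- One step of the ParamHS Markov chain on `{1, …, φ}` induced by
an injective `f` samples a step size `s ∈ {1, …, φ−1}` with probability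
`1/(s·H_{φ−1})` and considers the candidate set `S = {x − s, x + s} ∩ {1, …, φ}`.
If the current state `x` satisfies `1 ≤ d* ≤ |x − x*| ≤ α·d*` for an integer `d*`
and a real `α ≥ 1`, then the probability that the sampled step size yields a
candidate set containing a point `y` with `|y − x*| ≤ ⌊d*/2⌋` is at least
`1/(2α·H_{φ−1})`.  Here `H_{φ−1} = ∑_{k=1}^{φ−1} 1/k` and distances are the
natural-number distances `Nat.dist`. -/
theorem paramHS_one_step_halving_probability (φ : ℕ) (hφ : 2 ≤ φ)
    (x xstar dstar : ℕ) (hx : x ∈ Finset.Icc 1 φ) (hxs : xstar ∈ Finset.Icc 1 φ)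
    (h1 : 1 ≤ dstar) (h2 : dstar ≤ Nat.dist x xstar)
    (α : ℝ) (hα : 1 ≤ α) (hdα : (Nat.dist x xstar : ℝ) ≤ α * (dstar : ℝ)) :
    1 / (2 * α * (∑ k ∈ Finset.Icc 1 (φ - 1), (1 : ℝ) / (k : ℝ))) ≤
      ∑ s ∈ Finset.Icc 1 (φ - 1),
        if ∃ y ∈ ({x - s, x + s} : Finset ℕ) ∩ Finset.Icc 1 φ,
            Nat.dist y xstar ≤ dstar / 2
        then 1 / ((s : ℝ) * (∑ k ∈ Finset.Icc 1 (φ - 1), (1 : ℝ) / (k : ℝ)))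
        else 0 := by
  simp only [Finset.mem_Icc] at hx hxs
  set H : ℝ := ∑ k ∈ Finset.Icc 1 (φ - 1), (1 : ℝ) / (k : ℝ) with hH
  have hHpos : 0 < H := by
    apply Finset.sum_pos
    · intro k hk
      simp only [Finset.mem_Icc] at hk
      have : 0 < (k : ℝ) := by exact_mod_cast hk.1
      positivity
    · exact ⟨1, by simp only [Finset.mem_Icc]; omega⟩
  set D := Nat.dist x xstar with hDdef
  have hDeq : D = x - xstar + (xstar - x) := rfl
  have hD1 : 1 ≤ D := le_trans h1 h2
  set m := dstar / 2 with hm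
  have key : ∀ s ∈ Finset.Icc (D - m) D,
      (if ∃ y ∈ ({x - s, x + s} : Finset ℕ) ∩ Finset.Icc 1 φ,
          Nat.dist y xstar ≤ dstar / 2
       then 1 / ((s : ℝ) * H) else 0) = 1 / ((s : ℝ) * H) := by
    intro s hs
    simp only [Finset.mem_Icc] at hs
    rw [if_pos]
    rcases le_total xstar x with hc | hc
    · refine ⟨x - s, ?_, ?_⟩
      · simp only [Finset.mem_inter, Finset.mem_insert, Finset.mem_singleton,
          Finset.mem_Icc]
        exact ⟨Or.inl trivial, by omega, by omega⟩
      · show (x - s) - xstar + (xstar - (x - s)) ≤ dstar / 2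
        omega
    · refine ⟨x + s, ?_, ?_⟩
      · simp only [Finset.mem_inter, Finset.mem_insert, Finset.mem_singleton,
          Finset.mem_Icc]
        exact ⟨Or.inr trivial, by omega, by omega⟩
      · show (x + s) - xstar + (xstar - (x + s)) ≤ dstar / 2
        omega
  have hDpos : (0:ℝ) < D := by exact_mod_cast hD1
  have hds : (dstar:ℝ) ≤ 2*(m:ℝ)+1 := by exact_mod_cast (by omega : dstar ≤ 2*m+1)
  have hstep1 : (1:ℝ) / (2 * α * H) ≤ ((m:ℝ) + 1) * (1 / ((D:ℝ) * H)) := by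
    rw [mul_one_div, div_le_div_iff₀ (by positivity) (by positivity)]
    have hDb : (D:ℝ) ≤ 2*α*((m:ℝ)+1) := by nlinarith
    nlinarith [hHpos, hDb]
  calc (1:ℝ) / (2 * α * H)
      ≤ ((m:ℝ) + 1) * (1 / ((D:ℝ) * H)) := hstep1
    _ = ∑ s ∈ Finset.Icc (D - m) D, 1 / ((D:ℝ) * H) := by
        rw [Finset.sum_const, Nat.card_Icc]
        have : D + 1 - (D - m) = m + 1 := by omega
        rw [this]
        push_cast
        ring
    _ ≤ ∑ s ∈ Finset.Icc (D - m) D, 1 / ((s:ℝ) * H) := by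
        apply Finset.sum_le_sum
        intro s hs
        simp only [Finset.mem_Icc] at hs
        have hs1 : 1 ≤ s := by omega
        have hspos : (0:ℝ) < s := by exact_mod_cast hs1
        have hsD : (s:ℝ) ≤ D := by exact_mod_cast hs.2
        apply one_div_le_one_div_of_le (by positivity)
        exact mul_le_mul_of_nonneg_right hsD hHpos.le
    _ = ∑ s ∈ Finset.Icc (D - m) D,
          (if ∃ y ∈ ({x - s, x + s} : Finset ℕ) ∩ Finset.Icc 1 φ,
              Nat.dist y xstar ≤ dstar / 2
           then 1 / ((s : ℝ) * H) else 0) := (Finset.sum_congr rfl key).symm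
    _ ≤ ∑ s ∈ Finset.Icc 1 (φ - 1),
          (if ∃ y ∈ ({x - s, x + s} : Finset ℕ) ∩ Finset.Icc 1 φ,
              Nat.dist y xstar ≤ dstar / 2
           then 1 / ((s : ℝ) * H) else 0) := by
        apply Finset.sum_le_sum_of_subset_of_nonneg
        · intro s hs
          simp only [Finset.mem_Icc] at hs ⊢
          omega
        · intro s _ _
          split
          · have hs0 : (0:ℝ) ≤ s := Nat.cast_nonneg s
            positivity
          · exact le_refl 0
end

section
/- Let φ ≥ 2 be an integer, let f : {1, …, φ} → ℝ be injective with minimizer x*, and suppose f is (α, β)-approximately unimodal with respect to x* for a real α ≥ 1 and an integer 1 ≤ β ≤ φ. Consider the ParamHS Markov chain on {1, …, φ} induced by f, and for a starting state x₀ let T(x₀) = inf{t ≥ 0 : X_t = x*} be the hitting time of x* when X_0 = x₀. Then for every x₀ ∈ {1, …, φ}, E[T(x₀)] ≤ 4α·H_{φ−1}·log₂(φ) + 4αβ·H_{φ−1}. -/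
open MeasureTheory
open scoped Classical

/-- The `(φ−1)`-th harmonic number `H_{φ−1} = ∑_{k=1}^{φ−1} 1/k`. -/
noncomputable def harmonicNumberPred (φ : ℕ) : ℝ :=
  ∑ k ∈ Finset.Icc 1 (φ - 1), (1 : ℝ) / (k : ℝ)

/-- The state reached by ParamHS from state `x` when the step size `d` is
sampled: the candidate set is `S = {x − d, x + d} ∩ {1, …, φ}`, `y` is the
element of `S` minimising `f`, and the chain moves to `y` iff `f y < f x`
(staying at `x` if `S` is empty). -/
noncomputable def paramHSNext (φ : ℕ) (f : ℕ → ℝ) (x d : ℕ) : ℕ :=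
  if h : ∃ y ∈ ({x - d, x + d} : Finset ℕ) ∩ Finset.Icc 1 φ,
      ∀ z ∈ ({x - d, x + d} : Finset ℕ) ∩ Finset.Icc 1 φ, f y ≤ f z then
    (if f h.choose < f x then h.choose else x)
  else x

/-- The transition probability of the ParamHS Markov chain on `{1, …, φ}`
induced by `f`: a step size `d ∈ {1, …, φ−1}` is sampled with probability
`1/(d·H_{φ−1})` and the chain moves to `paramHSNext φ f x d`. -/
noncomputable def paramHSTransProb (φ : ℕ) (f : ℕ → ℝ) (x y : ℕ) : ℝ :=
  ∑ d ∈ Finset.Icc 1 (φ - 1),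
    if paramHSNext φ f x d = y then 1 / ((d : ℝ) * harmonicNumberPred φ) else 0

/-- `(α, β)`-approximate unimodality (Definition 1 of the paper) of
`f : {1, …, φ} → ℝ` with respect to the point `xstar`. -/
def ApproxUnimodal (φ : ℕ) (f : ℕ → ℝ) (xstar : ℕ) (α : ℝ) (β : ℕ) : Prop :=
  ∀ x ∈ Finset.Icc 1 φ, ∀ y ∈ Finset.Icc 1 φ,
    (β : ℝ) ≤ |(x : ℝ) - (xstar : ℝ)| →
    α * |(x : ℝ) - (xstar : ℝ)| < |(y : ℝ) - (xstar : ℝ)| → f x < f y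

section AuxDet

lemma harmonic_ge_one {φ : ℕ} (hφ : 2 ≤ φ) : 1 ≤ harmonicNumberPred φ := by
  have h1 : (1:ℕ) ∈ Finset.Icc 1 (φ-1) := by simp; omega
  have := Finset.single_le_sum (f := fun k : ℕ => (1:ℝ)/(k:ℝ))
    (fun i _ => by positivity) h1
  simpa [harmonicNumberPred] using this

lemma harmonicPred_pos {φ : ℕ} (hφ : 2 ≤ φ) : 0 < harmonicNumberPred φ :=
  lt_of_lt_of_le one_pos (harmonic_ge_one hφ)


lemma sum_inv_mul_harmonic {φ : ℕ} (hφ : 2 ≤ φ) :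
    ∑ d ∈ Finset.Icc 1 (φ - 1), 1 / ((d : ℝ) * harmonicNumberPred φ) = 1 := by
  have hH := harmonicPred_pos hφ
  have : ∑ d ∈ Finset.Icc 1 (φ - 1), 1 / ((d : ℝ) * harmonicNumberPred φ)
      = (∑ d ∈ Finset.Icc 1 (φ - 1), (1:ℝ) / (d:ℝ)) / harmonicNumberPred φ := by
    rw [Finset.sum_div]
    refine Finset.sum_congr rfl fun d _ => ?_
    rw [div_div]
  rw [this]
  rw [show (∑ d ∈ Finset.Icc 1 (φ - 1), (1:ℝ) / (d:ℝ)) = harmonicNumberPred φ from rfl]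
  field_simp

lemma paramHSNext_mem {φ x : ℕ} (f : ℕ → ℝ) (d : ℕ) (hx : x ∈ Finset.Icc 1 φ) :
    paramHSNext φ f x d ∈ Finset.Icc 1 φ := by
  unfold paramHSNext
  split_ifs with h h2
  · exact (Finset.mem_inter.1 h.choose_spec.1).2
  · exact hx
  · exact hx

lemma paramHSNext_le (φ : ℕ) (f : ℕ → ℝ) (x d : ℕ) :
    paramHSNext φ f x d = x ∨ f (paramHSNext φ f x d) < f x := by
  unfold paramHSNext
  split_ifs with h h2
  · exact Or.inr h2
  · exact Or.inl rfl
  · exact Or.inl rfl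

lemma paramHSNext_beats {φ x d z : ℕ} (f : ℕ → ℝ)
    (hz : z ∈ ({x - d, x + d} : Finset ℕ) ∩ Finset.Icc 1 φ) (hfz : f z < f x) :
    f (paramHSNext φ f x d) ≤ f z := by
  have hne : (({x - d, x + d} : Finset ℕ) ∩ Finset.Icc 1 φ).Nonempty := ⟨z, hz⟩
  obtain ⟨b, hb, hbmin⟩ := Finset.exists_min_image _ f hne
  have hex : ∃ y ∈ ({x - d, x + d} : Finset ℕ) ∩ Finset.Icc 1 φ,
      ∀ w ∈ ({x - d, x + d} : Finset ℕ) ∩ Finset.Icc 1 φ, f y ≤ f w := ⟨b, hb, hbmin⟩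
  unfold paramHSNext
  rw [dif_pos hex]
  have hcz : f hex.choose ≤ f z := hex.choose_spec.2 z hz
  split_ifs with h2
  · exact hcz
  · exact absurd (lt_of_le_of_lt hcz hfz) h2

lemma paramHSTransProb_nonneg {φ : ℕ} (hφ : 2 ≤ φ) (f : ℕ → ℝ) (x y : ℕ) :
    0 ≤ paramHSTransProb φ f x y := by
  refine Finset.sum_nonneg fun d _ => ?_
  split_ifs
  · have := harmonicPred_pos hφ; positivity
  · exact le_refl 0

lemma paramHSTransProb_zero {φ x y : ℕ} (f : ℕ → ℝ) (hx : x ∈ Finset.Icc 1 φ)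
    (hy : y ∉ Finset.Icc 1 φ) : paramHSTransProb φ f x y = 0 := by
  refine Finset.sum_eq_zero fun d _ => ?_
  rw [if_neg]
  intro hc
  exact hy (hc ▸ paramHSNext_mem f d hx)

end AuxDet

section V
variable (φ : ℕ) (f : ℕ → ℝ) (xstar : ℕ) (α : ℝ) (β : ℕ)

noncomputable def gval (w : ℕ) : ℝ :=
  4*α*(β:ℝ)*harmonicNumberPred φ
    + 4*α*harmonicNumberPred φ * Real.logb 2 |(w:ℝ) - (xstar:ℝ)|

noncomputable def Vfun (x : ℕ) : ℝ :=
  (insert (0:ℝ) ((((Finset.Icc 1 φ).erase xstar).filter fun w => f w ≤ f x).image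
    (gval φ xstar α β))).max' (Finset.insert_nonempty _ _)

variable {φ f xstar α β}

lemma Vfun_nonneg (x : ℕ) : 0 ≤ Vfun φ f xstar α β x :=
  Finset.le_max' _ _ (Finset.mem_insert_self _ _)

lemma Vfun_mono {x y : ℕ} (h : f y ≤ f x) :
    Vfun φ f xstar α β y ≤ Vfun φ f xstar α β x := by
  refine Finset.max'_le _ _ _ fun v hv => ?_
  rcases Finset.mem_insert.1 hv with rfl | hv
  · exact Vfun_nonneg x
  · obtain ⟨w, hw, rfl⟩ := Finset.mem_image.1 hv
    refine Finset.le_max' _ _ (Finset.mem_insert_of_mem (Finset.mem_image.2 ⟨w, ?_, rfl⟩))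
    rw [Finset.mem_filter] at hw ⊢
    exact ⟨hw.1, hw.2.trans h⟩

lemma gval_le_Vfun {x : ℕ} (hx : x ∈ (Finset.Icc 1 φ).erase xstar) :
    gval φ xstar α β x ≤ Vfun φ f xstar α β x := by
  refine Finset.le_max' _ _ (Finset.mem_insert_of_mem (Finset.mem_image.2 ⟨x, ?_, rfl⟩))
  exact Finset.mem_filter.2 ⟨hx, le_refl _⟩

lemma dist_ge_one {w v : ℕ} (h : w ≠ v) : (1:ℝ) ≤ |(w:ℝ) - (v:ℝ)| := by
  have h1 : (1:ℤ) ≤ |(w:ℤ) - (v:ℤ)| :=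
    Int.one_le_abs (sub_ne_zero.mpr (by exact_mod_cast h))
  have : ((1:ℤ):ℝ) ≤ ((|(w:ℤ) - (v:ℤ)|:ℤ):ℝ) := by exact_mod_cast h1
  rw [Int.cast_abs] at this
  push_cast at this
  exact_mod_cast this

/-- All elements in the max defining `Vfun` over points of `Icc 1 φ` are
bounded by the global bound. -/
lemma Vfun_le_bound (hφ : 2 ≤ φ) (hα : 1 ≤ α)
    (hxs : xstar ∈ Finset.Icc 1 φ) (x : ℕ) :
    Vfun φ f xstar α β x
      ≤ 4*α*(β:ℝ)*harmonicNumberPred φ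
          + 4*α*harmonicNumberPred φ * Real.logb 2 (φ:ℝ) := by
  have hH : 0 < harmonicNumberPred φ := harmonicPred_pos hφ
  have hαH : (0:ℝ) ≤ 4*α*harmonicNumberPred φ := by nlinarith
  have hlogφ : 0 ≤ Real.logb 2 (φ:ℝ) :=
    Real.logb_nonneg one_lt_two (by exact_mod_cast hφ.trans' one_le_two)
  refine Finset.max'_le _ _ _ fun v hv => ?_
  rcases Finset.mem_insert.1 hv with rfl | hv
  · nlinarith
  · obtain ⟨w, hw, rfl⟩ := Finset.mem_image.1 hv
    have hwS := (Finset.mem_filter.1 hw).1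
    have hwI : w ∈ Finset.Icc 1 φ := Finset.mem_of_mem_erase hwS
    have hwne : w ≠ xstar := Finset.ne_of_mem_erase hwS
    have h1 : (1:ℝ) ≤ |(w:ℝ) - (xstar:ℝ)| := dist_ge_one hwne
    have h2 : |(w:ℝ) - (xstar:ℝ)| ≤ (φ:ℝ) := by
      simp only [Finset.mem_Icc] at hwI hxs
      rw [abs_le]
      have c1 : (1:ℝ) ≤ (w:ℝ) := by exact_mod_cast hwI.1
      have c2 : (w:ℝ) ≤ (φ:ℝ) := by exact_mod_cast hwI.2
      have c3 : (1:ℝ) ≤ (xstar:ℝ) := by exact_mod_cast hxs.1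
      have c4 : (xstar:ℝ) ≤ (φ:ℝ) := by exact_mod_cast hxs.2
      constructor <;> linarith
    have hlog : Real.logb 2 |(w:ℝ) - (xstar:ℝ)| ≤ Real.logb 2 (φ:ℝ) :=
      (Real.logb_le_logb one_lt_two (by linarith) (by positivity)).2 h2
    have := mul_le_mul_of_nonneg_left hlog hαH
    simp only [gval]
    linarith
end V

section Drift
variable {φ : ℕ} {f : ℕ → ℝ} {xstar : ℕ} {α : ℝ} {β : ℕ}

set_option maxHeartbeats 1000000 in
lemma drift_main (hφ : 2 ≤ φ)
    (hxs : xstar ∈ Finset.Icc 1 φ)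
    (hmin : ∀ y ∈ Finset.Icc 1 φ, y ≠ xstar → f xstar < f y)
    (hα : 1 ≤ α) (hβ1 : 1 ≤ β) (hβφ : β ≤ φ)
    (huni : ApproxUnimodal φ f xstar α β) {x : ℕ}
    (hx : x ∈ (Finset.Icc 1 φ).erase xstar) :
    ∑ y ∈ (Finset.Icc 1 φ).erase xstar,
        paramHSTransProb φ f x y * Vfun φ f xstar α β y + 1
      ≤ Vfun φ f xstar α β x := by
  classical
  set H := harmonicNumberPred φ with hHdef
  have hH1 : 1 ≤ H := harmonic_ge_one hφ
  have hH : 0 < H := harmonicPred_pos hφ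
  have hα0 : 0 < α := lt_of_lt_of_le one_pos hα
  set S := (Finset.Icc 1 φ).erase xstar with hSdef
  set V := Vfun φ f xstar α β with hVdef
  have hxI : x ∈ Finset.Icc 1 φ := Finset.mem_of_mem_erase hx
  have hxne : x ≠ xstar := Finset.ne_of_mem_erase hx
  have hx1 : 1 ≤ x := (Finset.mem_Icc.1 hxI).1
  have hx2 : x ≤ φ := (Finset.mem_Icc.1 hxI).2
  have hs1 : 1 ≤ xstar := (Finset.mem_Icc.1 hxs).1
  have hs2 : xstar ≤ φ := (Finset.mem_Icc.1 hxs).2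
  set δ : ℕ := if xstar ≤ x then x - xstar else xstar - x with hδdef
  have hδeq : xstar + δ = x ∨ x + δ = xstar := by
    rw [hδdef]; split_ifs with h
    · left; omega
    · right; omega
  have hδ1 : 1 ≤ δ := by rcases hδeq with h | h <;> omega
  have hδφ : δ ≤ φ - 1 := by rcases hδeq with h | h <;> omega
  have hδpos : (0:ℝ) < (δ:ℝ) := by exact_mod_cast hδ1
  have hδcast : |(x:ℝ) - (xstar:ℝ)| = (δ:ℝ) := by
    rcases hδeq with h | h
    · have hc : (xstar:ℝ) + (δ:ℝ) = (x:ℝ) := by exact_mod_cast h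
      rw [abs_of_nonneg (by linarith)]; linarith
    · have hc : (x:ℝ) + (δ:ℝ) = (xstar:ℝ) := by exact_mod_cast h
      rw [abs_of_nonpos (by linarith)]; linarith
  set W : ℕ → ℝ := fun y => if y ∈ S then V y else 0 with hWdef
  have hgx : gval φ xstar α β x
      = 4*α*(β:ℝ)*H + 4*α*H * Real.logb 2 (δ:ℝ) := by
    simp only [gval, hδcast, hHdef]
  have hVxg : gval φ xstar α β x ≤ V x := gval_le_Vfun hx
  have hlogδ : 0 ≤ Real.logb 2 (δ:ℝ) :=
    Real.logb_nonneg one_lt_two (by exact_mod_cast hδ1)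
  have hβR : (1:ℝ) ≤ (β:ℝ) := by exact_mod_cast hβ1
  have hαH : (0:ℝ) < α * H := mul_pos hα0 hH
  have t1 : (0:ℝ) ≤ 4*α*H*Real.logb 2 (δ:ℝ) :=
    mul_nonneg (by linarith [hαH]) hlogδ
  have t2 : (0:ℝ) ≤ ((β:ℝ)-1) * (4*α*H) :=
    mul_nonneg (by linarith) (by linarith [hαH])
  have hVx4 : 4*α*H ≤ V x := by linarith [hVxg, hgx.ge, t1, t2]
  have hall : ∀ d, W (paramHSNext φ f x d) ≤ V x := by
    intro d
    rcases paramHSNext_le φ f x d with heq | hlt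
    · rw [heq]; simp only [hWdef]
      split_ifs <;> first | exact le_refl _ | exact Vfun_nonneg x
    · simp only [hWdef]
      split_ifs <;> first | exact Vfun_mono (le_of_lt hlt) | exact Vfun_nonneg x
  have step1 : ∑ y ∈ S, paramHSTransProb φ f x y * V y
      = ∑ d ∈ Finset.Icc 1 (φ-1), (1 / ((d:ℝ) * H)) * W (paramHSNext φ f x d) := by
    unfold paramHSTransProb
    rw [← hHdef]
    have hrw : ∀ y ∈ S, (∑ d ∈ Finset.Icc 1 (φ-1),
          if paramHSNext φ f x d = y then 1/((d:ℝ)*H) else 0) * V y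
        = ∑ d ∈ Finset.Icc 1 (φ-1),
            if paramHSNext φ f x d = y then (1/((d:ℝ)*H)) * V y else 0 := by
      intro y _
      rw [Finset.sum_mul]
      exact Finset.sum_congr rfl fun d _ => by split_ifs <;> simp
    rw [Finset.sum_congr rfl hrw, Finset.sum_comm]
    refine Finset.sum_congr rfl fun d _ => ?_
    rw [Finset.sum_ite_eq S (paramHSNext φ f x d) (fun y => (1/((d:ℝ)*H)) * V y)]
    simp only [hWdef]
    split_ifs <;> simp
  have key : ∀ (G : Finset ℕ) (ε : ℝ), G ⊆ Finset.Icc 1 (φ-1) → 0 ≤ ε →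
      (∀ d ∈ G, W (paramHSNext φ f x d) ≤ V x - ε) →
      (1 ≤ ε * ∑ d ∈ G, 1/((d:ℝ)*H)) →
      ∑ d ∈ Finset.Icc 1 (φ-1), (1/((d:ℝ)*H)) * W (paramHSNext φ f x d) + 1 ≤ V x := by
    intro G ε hGsub hε hG hsum
    have hterm : ∀ d : ℕ, d ∈ Finset.Icc 1 (φ-1) → (0:ℝ) ≤ 1/((d:ℝ)*H) := by
      intro d hd
      have h1 : (1:ℕ) ≤ d := (Finset.mem_Icc.1 hd).1
      have h2 : (0:ℝ) < (d:ℝ) := by exact_mod_cast h1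
      exact le_of_lt (div_pos one_pos (mul_pos h2 hH))
    have hsplit : ∑ d ∈ Finset.Icc 1 (φ-1) \ G, (1/((d:ℝ)*H)) * W (paramHSNext φ f x d)
        + ∑ d ∈ G, (1/((d:ℝ)*H)) * W (paramHSNext φ f x d)
        = ∑ d ∈ Finset.Icc 1 (φ-1), (1/((d:ℝ)*H)) * W (paramHSNext φ f x d) :=
      Finset.sum_sdiff hGsub
    have hsplitw : ∑ d ∈ Finset.Icc 1 (φ-1) \ G, 1/((d:ℝ)*H)
        + ∑ d ∈ G, 1/((d:ℝ)*H) = 1 := by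
      rw [hHdef]
      have h := Finset.sum_sdiff (f := fun d : ℕ => 1/((d:ℝ)*(harmonicNumberPred φ))) hGsub
      rw [sum_inv_mul_harmonic hφ] at h
      exact h
    have h1 : ∑ d ∈ Finset.Icc 1 (φ-1) \ G, (1/((d:ℝ)*H)) * W (paramHSNext φ f x d)
        ≤ (∑ d ∈ Finset.Icc 1 (φ-1) \ G, 1/((d:ℝ)*H)) * V x := by
      rw [Finset.sum_mul]
      exact Finset.sum_le_sum fun d hd =>
        mul_le_mul_of_nonneg_left (hall d) (hterm d (Finset.mem_sdiff.1 hd).1)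
    have h2 : ∑ d ∈ G, (1/((d:ℝ)*H)) * W (paramHSNext φ f x d)
        ≤ (∑ d ∈ G, 1/((d:ℝ)*H)) * (V x - ε) := by
      rw [Finset.sum_mul]
      exact Finset.sum_le_sum fun d hd =>
        mul_le_mul_of_nonneg_left (hG d hd) (hterm d (hGsub hd))
    have hs3 : (∑ d ∈ Finset.Icc 1 (φ-1) \ G, 1/((d:ℝ)*H)
        + ∑ d ∈ G, 1/((d:ℝ)*H)) * V x = V x := by
      rw [hsplitw, one_mul]
    linarith [h1, h2, hsum, hsplit, hs3]
  rw [step1]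
  rcases le_or_gt (δ:ℝ) (4*α*(β:ℝ)) with hcase | hcase
  · -- close regime: jump directly to xstar with step size δ
    have hδI : δ ∈ Finset.Icc 1 (φ-1) := Finset.mem_Icc.2 ⟨hδ1, hδφ⟩
    have hxstarcand : xstar ∈ ({x - δ, x + δ} : Finset ℕ) ∩ Finset.Icc 1 φ := by
      simp only [Finset.mem_inter, Finset.mem_insert, Finset.mem_singleton]
      refine ⟨?_, hxs⟩
      rcases hδeq with h | h
      · left; omega
      · right; omega
    have hfxs : f xstar < f x := hmin x hxI hxne
    have hnext : paramHSNext φ f x δ = xstar := by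
      have hble := paramHSNext_beats f hxstarcand hfxs
      by_contra hne
      exact absurd hble (not_le.2 (hmin _ (paramHSNext_mem f δ hxI) hne))
    have t3 : (δ:ℝ)*H ≤ 4*α*(β:ℝ)*H := by
      have h := mul_nonneg (show (0:ℝ) ≤ 4*α*(β:ℝ) - (δ:ℝ) by linarith) hH.le
      nlinarith [h]
    have hVx : (δ:ℝ) * H ≤ V x := by linarith [hVxg, hgx.ge, t1, t3]
    refine key {δ} (V x) (Finset.singleton_subset_iff.2 hδI) (Vfun_nonneg x) ?_ ?_
    · intro d hd
      rw [Finset.mem_singleton] at hd; subst hd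
      rw [hnext]
      have hW0 : W xstar = 0 := by
        simp only [hWdef, hSdef]
        rw [if_neg (Finset.notMem_erase _ _)]
      rw [hW0]; linarith
    · rw [Finset.sum_singleton, mul_one_div, le_div_iff₀ (mul_pos hδpos hH)]
      linarith
  · -- far regime
    have hβδ : 4*α*(β:ℝ) ≤ (δ:ℝ) := le_of_lt hcase
    obtain ⟨k₀, hk0le, hfl⟩ : ∃ k₀ : ℕ, (k₀:ℝ) ≤ (δ:ℝ)/(2*α)
        ∧ (δ:ℝ)/(2*α) - 1 < (k₀:ℝ) :=
      ⟨⌊(δ:ℝ)/(2*α)⌋₊,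
        Nat.floor_le (div_nonneg (Nat.cast_nonneg δ) (by linarith)),
        by have h := Nat.lt_floor_add_one ((δ:ℝ)/(2*α)); linarith⟩
    have hd2 : (2:ℝ)*(β:ℝ) ≤ (δ:ℝ)/(2*α) := by
      rw [le_div_iff₀ (by linarith)]; nlinarith
    have hβk0 : β ≤ k₀ := by
      have hr : (β:ℝ) ≤ (k₀:ℝ) := by linarith
      exact_mod_cast hr
    have hkfacts : ∀ k ∈ Finset.Icc β k₀, (k:ℝ)*(2*α) ≤ (δ:ℝ) ∧ k < δ := by
      intro k hk
      have hk2 : k ≤ k₀ := (Finset.mem_Icc.1 hk).2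
      have h1 : (k:ℝ) ≤ (δ:ℝ)/(2*α) := le_trans (by exact_mod_cast hk2) hk0le
      have h1' : (k:ℝ)*(2*α) ≤ (δ:ℝ) := by
        rw [← le_div_iff₀ (by linarith)]; exact h1
      have hkR : (0:ℝ) ≤ (k:ℝ) := Nat.cast_nonneg k
      have hlt : (k:ℝ) < (δ:ℝ) := by nlinarith
      exact ⟨h1', by exact_mod_cast hlt⟩
    have hGsub : (Finset.Icc β k₀).image (fun k => δ - k) ⊆ Finset.Icc 1 (φ-1) := by
      intro d hd
      obtain ⟨k, hk, rfl⟩ := Finset.mem_image.1 hd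
      have := (hkfacts k hk).2
      exact Finset.mem_Icc.2 ⟨by omega, by omega⟩
    have hεpos : (0:ℝ) ≤ 4*α*H := by linarith [hαH]
    refine key ((Finset.Icc β k₀).image (fun k => δ - k)) (4*α*H) hGsub hεpos ?_ ?_
    · intro d hd
      obtain ⟨k, hk, rfl⟩ := Finset.mem_image.1 hd
      obtain ⟨hkβ, hk0'⟩ := Finset.mem_Icc.1 hk
      have h2αk := (hkfacts k hk).1
      have hkδ := (hkfacts k hk).2
      have hkβR : (β:ℝ) ≤ (k:ℝ) := by exact_mod_cast hkβ
      have hk1R : (1:ℝ) ≤ (k:ℝ) := le_trans hβR hkβR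
      have hkpos : (0:ℝ) < (k:ℝ) := by linarith
      obtain ⟨z, hzcand, hDz⟩ :
          ∃ z : ℕ, z ∈ ({x - (δ - k), x + (δ - k)} : Finset ℕ) ∩ Finset.Icc 1 φ ∧
            |(z:ℝ) - (xstar:ℝ)| = (k:ℝ) := by
        rcases hδeq with h | h
        · refine ⟨xstar + k, ?_, ?_⟩
          · simp only [Finset.mem_inter, Finset.mem_insert, Finset.mem_singleton,
              Finset.mem_Icc]
            exact ⟨Or.inl (by omega), by omega, by omega⟩
          · push_cast
            rw [abs_of_nonneg (by linarith)]
            ring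
        · refine ⟨xstar - k, ?_, ?_⟩
          · simp only [Finset.mem_inter, Finset.mem_insert, Finset.mem_singleton,
              Finset.mem_Icc]
            exact ⟨Or.inr (by omega), by omega, by omega⟩
          · have hkxs : k ≤ xstar := by omega
            rw [Nat.cast_sub hkxs]
            rw [abs_of_nonpos (by linarith)]
            ring
      have hzI : z ∈ Finset.Icc 1 φ := (Finset.mem_inter.1 hzcand).2
      have hfzx : f z < f x := by
        refine huni z hzI x hxI ?_ ?_
        · rw [hDz]; exact hkβR
        · rw [hDz, hδcast]
          nlinarith [mul_pos hα0 hkpos]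
      have hble : f (paramHSNext φ f x (δ - k)) ≤ f z := paramHSNext_beats f hzcand hfzx
      have hbnd : ∀ w ∈ S, f w ≤ f (paramHSNext φ f x (δ - k)) →
          gval φ xstar α β w ≤ V x - 4*α*H := by
        intro w hwS hfw
        have hwI : w ∈ Finset.Icc 1 φ := Finset.mem_of_mem_erase hwS
        have hwne : w ≠ xstar := Finset.ne_of_mem_erase hwS
        have hfwz : f w ≤ f z := le_trans hfw hble
        have hDw : |(w:ℝ) - (xstar:ℝ)| ≤ α * (k:ℝ) := by
          by_contra hcon
          push_neg at hcon
          have := huni z hzI w hwI (by rw [hDz]; exact hkβR) (by rw [hDz]; exact hcon)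
          linarith
        have hDw1 : (1:ℝ) ≤ |(w:ℝ) - (xstar:ℝ)| := dist_ge_one hwne
        have hαk : (0:ℝ) < α * (k:ℝ) := mul_pos hα0 hkpos
        have l1 : Real.logb 2 |(w:ℝ) - (xstar:ℝ)| ≤ Real.logb 2 (α*(k:ℝ)) :=
          (Real.logb_le_logb one_lt_two (by linarith) hαk).2 hDw
        have l2 : Real.logb 2 (α*(k:ℝ)) ≤ Real.logb 2 ((δ:ℝ)/2) := by
          refine (Real.logb_le_logb one_lt_two hαk (by linarith)).2 ?_
          nlinarith
        have l3 : Real.logb 2 ((δ:ℝ)/2) = Real.logb 2 (δ:ℝ) - 1 := by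
          rw [Real.logb_div (by linarith) two_ne_zero,
            Real.logb_self_eq_one one_lt_two]
        have l4 : Real.logb 2 |(w:ℝ) - (xstar:ℝ)| ≤ Real.logb 2 (δ:ℝ) - 1 := by
          rw [← l3]; exact le_trans l1 l2
        have hmul := mul_le_mul_of_nonneg_left l4 hεpos
        simp only [gval, ← hHdef]
        linarith [hmul, hVxg, hgx.ge]
      by_cases hnS : paramHSNext φ f x (δ - k) ∈ S
      · have hWe : W (paramHSNext φ f x (δ - k)) = V (paramHSNext φ f x (δ - k)) := by
          simp only [hWdef]; rw [if_pos hnS]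
        rw [hWe, hVdef]
        refine Finset.max'_le _ _ _ fun v hv => ?_
        rcases Finset.mem_insert.1 hv with rfl | hv
        · linarith
        · obtain ⟨w, hw, rfl⟩ := Finset.mem_image.1 hv
          obtain ⟨hwS, hfw⟩ := Finset.mem_filter.1 hw
          exact hbnd w hwS hfw
      · have hWe : W (paramHSNext φ f x (δ - k)) = 0 := by
          simp only [hWdef]; rw [if_neg hnS]
        rw [hWe]; linarith
    · -- probability mass of good steps
      have hinj : ∀ a ∈ Finset.Icc β k₀, ∀ b ∈ Finset.Icc β k₀,
          δ - a = δ - b → a = b := by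
        intro a ha b hb hab
        have h1 := (hkfacts a ha).2
        have h2 := (hkfacts b hb).2
        omega
      rw [Finset.sum_image hinj]
      have hsum1 : (((Finset.Icc β k₀).card:ℕ):ℝ) * (1/((δ:ℝ)*H))
          ≤ ∑ k ∈ Finset.Icc β k₀, 1/(((δ - k:ℕ):ℝ)*H) := by
        have hconst : ∑ _k ∈ Finset.Icc β k₀, (1/((δ:ℝ)*H))
            = (((Finset.Icc β k₀).card:ℕ):ℝ) * (1/((δ:ℝ)*H)) := by
          rw [Finset.sum_const, nsmul_eq_mul]
        rw [← hconst]
        refine Finset.sum_le_sum fun k hk => ?_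
        have hkδ := (hkfacts k hk).2
        have hc : ((δ - k:ℕ):ℝ) = (δ:ℝ) - (k:ℝ) := by
          rw [Nat.cast_sub (le_of_lt hkδ)]
        have h1 : (1:ℝ) ≤ ((δ - k:ℕ):ℝ) := by
          have h : 1 ≤ δ - k := by omega
          exact_mod_cast h
        refine one_div_le_one_div_of_le (mul_pos (by linarith) hH) ?_
        have hkR : (0:ℝ) ≤ (k:ℝ) := Nat.cast_nonneg k
        have hle : ((δ - k:ℕ):ℝ) ≤ (δ:ℝ) := by rw [hc]; linarith
        exact mul_le_mul_of_nonneg_right hle hH.le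
      have hcardR : (δ:ℝ)/(4*α) ≤ (((Finset.Icc β k₀).card:ℕ):ℝ) := by
        rw [Nat.card_Icc]
        have hb1 : β ≤ k₀ + 1 := by omega
        have hcst : ((k₀ + 1 - β:ℕ):ℝ) = (k₀:ℝ) + 1 - (β:ℝ) := by
          push_cast [Nat.cast_sub hb1]; ring
        rw [hcst]
        have hβb : (β:ℝ) ≤ (δ:ℝ)/(4*α) := by
          rw [le_div_iff₀ (by linarith)]; nlinarith
        have heq2 : (δ:ℝ)/(2*α) - (δ:ℝ)/(4*α) = (δ:ℝ)/(4*α) := by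
          have hαne : α ≠ 0 := ne_of_gt hα0
          field_simp; ring
        linarith
      have hHne : H ≠ 0 := ne_of_gt hH
      have hδne : (δ:ℝ) ≠ 0 := ne_of_gt hδpos
      have hαne : α ≠ 0 := ne_of_gt hα0
      have hc1 : 4*α*H * (((δ:ℝ)/(4*α)) * (1/((δ:ℝ)*H))) = 1 := by
        field_simp
      calc (1:ℝ) = 4*α*H * (((δ:ℝ)/(4*α)) * (1/((δ:ℝ)*H))) := hc1.symm
        _ ≤ 4*α*H * ((((Finset.Icc β k₀).card:ℕ):ℝ) * (1/((δ:ℝ)*H))) := by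
            refine mul_le_mul_of_nonneg_left ?_ hεpos
            exact mul_le_mul_of_nonneg_right hcardR
              (le_of_lt (div_pos one_pos (mul_pos hδpos hH)))
        _ ≤ 4*α*H * ∑ k ∈ Finset.Icc β k₀, 1/(((δ - k:ℕ):ℝ)*H) :=
            mul_le_mul_of_nonneg_left hsum1 hεpos
end Drift

section Prob
open MeasureTheory
variable {Ω : Type*} [MeasurableSpace Ω]

/-- Probability that the chain follows the finite trajectory `h` up to time `t`. -/
noncomputable def trajProb (μ : Measure Ω) (X : ℕ → Ω → ℕ) (t : ℕ)
    (h : Fin (t+1) → ℕ) : ENNReal :=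
  μ {ω | ∀ s : Fin (t+1), X (s : ℕ) ω = h s}

/-- Trajectories that start at `x₀`, stay in `{1,…,φ} \ {xstar}` and end at `x`. -/
def GoodTraj (φ xstar x₀ t x : ℕ) : Set (Fin (t+1) → ℕ) :=
  {h | h 0 = x₀ ∧ (∀ s, h s ∈ (Finset.Icc 1 φ).erase xstar) ∧ h (Fin.last t) = x}

noncomputable def aFun (μ : Measure Ω) (X : ℕ → Ω → ℕ) (φ xstar x₀ t x : ℕ) : ENNReal :=
  ∑' h : Fin (t+1) → ℕ, (GoodTraj φ xstar x₀ t x).indicator (trajProb μ X t) h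

lemma trajProb_succ (μ : Measure Ω) (φ : ℕ) (f : ℕ → ℝ) (X : ℕ → Ω → ℕ)
    (hmarkov : ∀ (t : ℕ) (h : ℕ → ℕ) (y : ℕ),
      μ {ω | (∀ s ≤ t, X s ω = h s) ∧ X (t + 1) ω = y}
        = ENNReal.ofReal (paramHSTransProb φ f (h t) y)
            * μ {ω | ∀ s ≤ t, X s ω = h s})
    (t : ℕ) (h : Fin (t+1+1) → ℕ) :
    trajProb μ X (t+1) h
      = ENNReal.ofReal (paramHSTransProb φ f (h (Fin.castSucc (Fin.last t)))
          (h (Fin.last (t+1))))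
        * trajProb μ X t (fun s => h s.castSucc) := by
  classical
  set g : ℕ → ℕ := fun n => if hn : n < t+1+1 then h ⟨n, hn⟩ else 0 with hgdef
  have hgval : ∀ (n : ℕ) (hn : n < t+1+1), g n = h ⟨n, hn⟩ := by
    intro n hn; simp only [hgdef]; rw [dif_pos hn]
  have hgval' : ∀ s : Fin (t+1+1), g (s : ℕ) = h s := by
    intro s
    rw [hgval (s : ℕ) s.isLt]
  have e1 : {ω | ∀ s : Fin (t+1+1), X (s : ℕ) ω = h s}
      = {ω | (∀ s ≤ t, X s ω = g s) ∧ X (t+1) ω = h (Fin.last (t+1))} := by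
    ext ω
    simp only [Set.mem_setOf_eq]
    constructor
    · intro hω
      refine ⟨fun s hs => ?_, hω (Fin.last (t+1))⟩
      have pf : s < t+1+1 := by omega
      rw [hgval s pf]
      exact hω ⟨s, pf⟩
    · rintro ⟨h1, h2⟩ s
      by_cases hs : (s : ℕ) ≤ t
      · rw [← hgval' s]
        exact h1 (s : ℕ) hs
      · have hs' : s = Fin.last (t+1) := by
          apply Fin.ext
          have := s.isLt
          simp only [Fin.val_last]
          omega
        rw [hs']; exact h2
  have e2 : {ω | ∀ s : Fin (t+1), X (s : ℕ) ω = (fun s : Fin (t+1) => h s.castSucc) s}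
      = {ω | ∀ s ≤ t, X s ω = g s} := by
    ext ω
    simp only [Set.mem_setOf_eq]
    constructor
    · intro hω s hs
      have pf : s < t+1 := by omega
      have := hω ⟨s, pf⟩
      simp only at this
      calc X s ω = h (Fin.castSucc ⟨s, pf⟩) := this
        _ = g s := by
            rw [hgval s (by omega)]
            exact congrArg h (Fin.ext rfl)
    · intro hω s
      have hs : (s : ℕ) ≤ t := by have := s.isLt; omega
      calc X (s : ℕ) ω = g (s : ℕ) := hω (s : ℕ) hs
        _ = h s.castSucc := by
            rw [hgval (s : ℕ) (by omega)]
            exact congrArg h (Fin.ext rfl)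
  have hgt : g t = h (Fin.castSucc (Fin.last t)) := by
    rw [hgval t (by omega)]
    exact congrArg h (Fin.ext rfl)
  have hm := hmarkov t g (h (Fin.last (t+1)))
  show μ {ω | ∀ s : Fin (t+1+1), X (s : ℕ) ω = h s} = _
  rw [e1, hm, hgt]
  congr 1
  show μ _ = μ {ω | ∀ s : Fin (t+1), X (s : ℕ) ω = (fun s : Fin (t+1) => h s.castSucc) s}
  rw [e2]

lemma trajProb_zero_bad (μ : Measure Ω) [IsProbabilityMeasure μ]
    (φ : ℕ) (f : ℕ → ℝ) (X : ℕ → Ω → ℕ) (x₀ : ℕ)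
    (hx₀ : x₀ ∈ Finset.Icc 1 φ)
    (hstart : ∀ᵐ ω ∂μ, X 0 ω = x₀)
    (hmarkov : ∀ (t : ℕ) (h : ℕ → ℕ) (y : ℕ),
      μ {ω | (∀ s ≤ t, X s ω = h s) ∧ X (t + 1) ω = y}
        = ENNReal.ofReal (paramHSTransProb φ f (h t) y)
            * μ {ω | ∀ s ≤ t, X s ω = h s})
    (t : ℕ) :
    ∀ h : Fin (t+1) → ℕ, (h 0 ≠ x₀ ∨ ∃ s, h s ∉ Finset.Icc 1 φ) →
      trajProb μ X t h = 0 := by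
  induction t with
  | zero =>
    intro h hbad
    have hnull : μ {ω | ¬ X 0 ω = x₀} = 0 := MeasureTheory.ae_iff.1 hstart
    have hkey : ∀ h0 : Fin (0+1) → ℕ, h0 0 ≠ x₀ → trajProb μ X 0 h0 = 0 := by
      intro h0 hne
      refine measure_mono_null ?_ hnull
      intro ω hω
      exact fun hc => hne ((hω 0).symm.trans hc)
    rcases hbad with hne | ⟨s, hs⟩
    · exact hkey h hne
    · have hs0 : s = 0 := by
        apply Fin.ext
        have := s.isLt
        omega
      subst hs0
      by_cases hne : h 0 = x₀
      · rw [hne] at hs; exact absurd hx₀ hs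
      · exact hkey h hne
  | succ t ih =>
    intro h hbad
    rw [trajProb_succ μ φ f X hmarkov t h]
    by_cases hres : ((fun s : Fin (t+1) => h s.castSucc) 0 ≠ x₀
        ∨ ∃ s : Fin (t+1), (fun s : Fin (t+1) => h s.castSucc) s ∉ Finset.Icc 1 φ)
    · rw [ih _ hres, mul_zero]
    · push_neg at hres
      obtain ⟨hres0, hresI⟩ := hres
      have hlastbad : h (Fin.last (t+1)) ∉ Finset.Icc 1 φ := by
        rcases hbad with hne | ⟨s, hs⟩
        · have hc : Fin.castSucc (0 : Fin (t+1)) = (0 : Fin (t+1+1)) := Fin.ext rfl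
          rw [hc] at hres0
          exact absurd hres0 hne
        · by_cases hlt : (s : ℕ) < t+1
          · have he : Fin.castSucc (⟨(s : ℕ), hlt⟩ : Fin (t+1)) = s := Fin.ext rfl
            have := hresI ⟨(s : ℕ), hlt⟩
            rw [he] at this
            exact absurd this hs
          · have hs' : s = Fin.last (t+1) := by
              apply Fin.ext
              have := s.isLt
              simp only [Fin.val_last]
              omega
            rw [← hs']; exact hs
      have hclastI : h (Fin.castSucc (Fin.last t)) ∈ Finset.Icc 1 φ := hresI (Fin.last t)
      rw [paramHSTransProb_zero f hclastI hlastbad, ENNReal.ofReal_zero, zero_mul]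

lemma aFun_succ_le (μ : Measure Ω) (φ : ℕ) (f : ℕ → ℝ) (X : ℕ → Ω → ℕ) (xstar x₀ : ℕ)
    (hmarkov : ∀ (t : ℕ) (h : ℕ → ℕ) (y : ℕ),
      μ {ω | (∀ s ≤ t, X s ω = h s) ∧ X (t + 1) ω = y}
        = ENNReal.ofReal (paramHSTransProb φ f (h t) y)
            * μ {ω | ∀ s ≤ t, X s ω = h s})
    (t x : ℕ) :
    aFun μ X φ xstar x₀ (t+1) x
      ≤ ∑ w ∈ (Finset.Icc 1 φ).erase xstar,
          ENNReal.ofReal (paramHSTransProb φ f w x) * aFun μ X φ xstar x₀ t w := by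
  classical
  set F : (Fin (t+1+1) → ℕ) → ENNReal :=
    (GoodTraj φ xstar x₀ (t+1) x).indicator (trajProb μ X (t+1)) with hFdef
  have heq : aFun μ X φ xstar x₀ (t+1) x = ∑' g : Fin (t+1) → ℕ, F (Fin.snoc g x) := by
    have h1 : aFun μ X φ xstar x₀ (t+1) x
        = ∑' q : ℕ × (Fin (t+1) → ℕ), F (Fin.snoc q.2 q.1) := by
      simp only [aFun, ← hFdef]
      exact (Equiv.tsum_eq (Fin.snocEquiv (fun _ => ℕ)) F).symm
    have h1b : ∑' q : ℕ × (Fin (t+1) → ℕ), F (Fin.snoc q.2 q.1)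
        = ∑' (y : ℕ), ∑' (g : Fin (t+1) → ℕ), F (Fin.snoc g y) :=
      ENNReal.tsum_prod (f := fun y g => F (Fin.snoc g y))
    have h2 : ∀ (y : ℕ) (g : Fin (t+1) → ℕ), y ≠ x → F (Fin.snoc g y) = 0 := by
      intro y g hne
      rw [hFdef]
      rw [Set.indicator_of_notMem]
      rintro ⟨-, -, hlast⟩
      rw [Fin.snoc_last] at hlast
      exact hne hlast
    have h3 : ∀ y : ℕ, (∑' g : Fin (t+1) → ℕ, F (Fin.snoc g y))
        = if y = x then ∑' g : Fin (t+1) → ℕ, F (Fin.snoc g x) else 0 := by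
      intro y
      split_ifs with hy
      · subst hy; rfl
      · rw [tsum_congr (fun g => h2 y g hy)]; exact tsum_zero
    rw [h1, h1b, tsum_congr h3, tsum_ite_eq x _]
  rw [heq]
  have hpt : ∀ g : Fin (t+1) → ℕ,
      F (Fin.snoc g x)
        ≤ ∑ w ∈ (Finset.Icc 1 φ).erase xstar,
            ENNReal.ofReal (paramHSTransProb φ f w x)
              * (GoodTraj φ xstar x₀ t w).indicator (trajProb μ X t) g := by
    intro g
    by_cases hg : Fin.snoc g x ∈ GoodTraj φ xstar x₀ (t+1) x
    · have hgood : g ∈ GoodTraj φ xstar x₀ t (g (Fin.last t)) := by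
        refine ⟨?_, fun s => ?_, rfl⟩
        · have h0 := hg.1
          have hc0 : Fin.castSucc (0 : Fin (t+1)) = (0 : Fin (t+1+1)) := Fin.ext rfl
          rw [← hc0, Fin.snoc_castSucc] at h0
          exact h0
        · have := hg.2.1 s.castSucc
          rw [Fin.snoc_castSucc] at this
          exact this
      have hwS : g (Fin.last t) ∈ (Finset.Icc 1 φ).erase xstar := by
        have := hg.2.1 (Fin.castSucc (Fin.last t))
        rw [Fin.snoc_castSucc] at this
        exact this
      have hrestr : (fun s : Fin (t+1) => Fin.snoc (α := fun _ => ℕ) g x s.castSucc) = g := by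
        funext s; rw [Fin.snoc_castSucc]
      have hstep := trajProb_succ μ φ f X hmarkov t (Fin.snoc g x)
      rw [Fin.snoc_last, Fin.snoc_castSucc, hrestr] at hstep
      rw [hFdef]
      rw [Set.indicator_of_mem hg, hstep]
      calc ENNReal.ofReal (paramHSTransProb φ f (g (Fin.last t)) x) * trajProb μ X t g
          = ENNReal.ofReal (paramHSTransProb φ f (g (Fin.last t)) x)
              * (GoodTraj φ xstar x₀ t (g (Fin.last t))).indicator (trajProb μ X t) g := by
            rw [Set.indicator_of_mem hgood]
        _ ≤ _ := Finset.single_le_sum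
            (f := fun w => ENNReal.ofReal (paramHSTransProb φ f w x)
              * (GoodTraj φ xstar x₀ t w).indicator (trajProb μ X t) g)
            (fun _ _ => zero_le) hwS
    · rw [hFdef, Set.indicator_of_notMem hg]; exact zero_le
  calc ∑' g : Fin (t+1) → ℕ, F (Fin.snoc g x)
      ≤ ∑' g : Fin (t+1) → ℕ, ∑ w ∈ (Finset.Icc 1 φ).erase xstar,
          ENNReal.ofReal (paramHSTransProb φ f w x)
            * (GoodTraj φ xstar x₀ t w).indicator (trajProb μ X t) g :=
        ENNReal.tsum_le_tsum hpt
    _ = ∑ w ∈ (Finset.Icc 1 φ).erase xstar, ∑' g : Fin (t+1) → ℕ,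
          ENNReal.ofReal (paramHSTransProb φ f w x)
            * (GoodTraj φ xstar x₀ t w).indicator (trajProb μ X t) g :=
        Summable.tsum_finsetSum (fun _ _ => ENNReal.summable)
    _ = ∑ w ∈ (Finset.Icc 1 φ).erase xstar,
          ENNReal.ofReal (paramHSTransProb φ f w x) * aFun μ X φ xstar x₀ t w := by
        refine Finset.sum_congr rfl fun w _ => ?_
        rw [ENNReal.tsum_mul_left]
        simp only [aFun]

lemma measure_avoid_le (μ : Measure Ω) [IsProbabilityMeasure μ]
    (φ : ℕ) (f : ℕ → ℝ) (X : ℕ → Ω → ℕ) (xstar x₀ : ℕ)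
    (hx₀ : x₀ ∈ Finset.Icc 1 φ)
    (hstart : ∀ᵐ ω ∂μ, X 0 ω = x₀)
    (hmarkov : ∀ (t : ℕ) (h : ℕ → ℕ) (y : ℕ),
      μ {ω | (∀ s ≤ t, X s ω = h s) ∧ X (t + 1) ω = y}
        = ENNReal.ofReal (paramHSTransProb φ f (h t) y)
            * μ {ω | ∀ s ≤ t, X s ω = h s})
    (t : ℕ) :
    μ {ω | ∀ s ≤ t, X s ω ≠ xstar}
      ≤ ∑ x ∈ (Finset.Icc 1 φ).erase xstar, aFun μ X φ xstar x₀ t x := by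
  classical
  have hcover : {ω | ∀ s ≤ t, X s ω ≠ xstar}
      ⊆ ⋃ h : Fin (t+1) → ℕ,
          ({ω | ∀ s : Fin (t+1), X (s : ℕ) ω = h s} ∩ {ω | ∀ s ≤ t, X s ω ≠ xstar}) := by
    intro ω hω
    exact Set.mem_iUnion.2 ⟨fun s => X (s : ℕ) ω, ⟨fun s => rfl, hω⟩⟩
  refine le_trans (le_trans (measure_mono hcover) (measure_iUnion_le _)) ?_
  have hswap : ∑ x ∈ (Finset.Icc 1 φ).erase xstar, aFun μ X φ xstar x₀ t x
      = ∑' h : Fin (t+1) → ℕ, ∑ x ∈ (Finset.Icc 1 φ).erase xstar,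
          (GoodTraj φ xstar x₀ t x).indicator (trajProb μ X t) h := by
    simp only [aFun]
    exact (Summable.tsum_finsetSum (fun _ _ => ENNReal.summable)).symm
  rw [hswap]
  refine ENNReal.tsum_le_tsum fun h => ?_
  by_cases hstar : ∃ s : Fin (t+1), h s = xstar
  · obtain ⟨s, hs⟩ := hstar
    have hempty : {ω | ∀ s : Fin (t+1), X (s : ℕ) ω = h s}
        ∩ {ω | ∀ s ≤ t, X s ω ≠ xstar} = ∅ := by
      rw [Set.eq_empty_iff_forall_notMem]
      rintro ω ⟨h1, h2⟩
      exact h2 (s : ℕ) (by have := s.isLt; omega) ((h1 s).trans hs)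
    rw [hempty, measure_empty]
    exact zero_le
  · push_neg at hstar
    by_cases hgood : h 0 = x₀ ∧ ∀ s, h s ∈ Finset.Icc 1 φ
    · have hS : ∀ s, h s ∈ (Finset.Icc 1 φ).erase xstar :=
        fun s => Finset.mem_erase.2 ⟨hstar s, hgood.2 s⟩
      have hmem : h ∈ GoodTraj φ xstar x₀ t (h (Fin.last t)) := ⟨hgood.1, hS, rfl⟩
      calc μ ({ω | ∀ s : Fin (t+1), X (s : ℕ) ω = h s} ∩ {ω | ∀ s ≤ t, X s ω ≠ xstar})
          ≤ trajProb μ X t h := measure_mono Set.inter_subset_left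
        _ = (GoodTraj φ xstar x₀ t (h (Fin.last t))).indicator (trajProb μ X t) h :=
            (Set.indicator_of_mem hmem _).symm
        _ ≤ _ := Finset.single_le_sum
            (f := fun x => (GoodTraj φ xstar x₀ t x).indicator (trajProb μ X t) h)
            (fun _ _ => zero_le) (hS (Fin.last t))
    · have hbad : h 0 ≠ x₀ ∨ ∃ s, h s ∉ Finset.Icc 1 φ := by
        by_cases h0 : h 0 = x₀
        · right; by_contra hc; push_neg at hc; exact hgood ⟨h0, hc⟩
        · left; exact h0
      have hz := trajProb_zero_bad μ φ f X x₀ hx₀ hstart hmarkov t h hbad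
      calc μ ({ω | ∀ s : Fin (t+1), X (s : ℕ) ω = h s} ∩ {ω | ∀ s ≤ t, X s ω ≠ xstar})
          ≤ trajProb μ X t h := measure_mono Set.inter_subset_left
        _ = 0 := hz
        _ ≤ _ := zero_le

end Prob

/-- Theorem 4 of the paper.  Let `f : {1, …, φ} → ℝ` (with `φ ≥ 2`)
be injective with unique minimizer `xstar`, and `(α, β)`-approximately unimodal
for a real `α ≥ 1` and an integer `1 ≤ β ≤ φ`.  For any Markov chain `(X_t)` with
the ParamHS transition probabilities started at `X_0 = x₀ ∈ {1, …, φ}`, the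
expected hitting time of `xstar` is at most
`4α·H_{φ−1}·log₂ φ + 4αβ·H_{φ−1}`.  The hitting time is the infimum in `ℝ≥0∞`
and its expectation is the lower Lebesgue integral. -/
theorem paramHS_hitting_time_approx_unimodal
    {Ω : Type*} [MeasurableSpace Ω] (μ : Measure Ω) [IsProbabilityMeasure μ]
    (φ : ℕ) (hφ : 2 ≤ φ) (f : ℕ → ℝ) (hf : Set.InjOn f (Set.Icc 1 φ))
    (xstar : ℕ) (hxs : xstar ∈ Finset.Icc 1 φ)
    (hmin : ∀ y ∈ Finset.Icc 1 φ, y ≠ xstar → f xstar < f y)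
    (α : ℝ) (β : ℕ) (hα : 1 ≤ α) (hβ1 : 1 ≤ β) (hβφ : β ≤ φ)
    (huni : ApproxUnimodal φ f xstar α β)
    (x₀ : ℕ) (hx₀ : x₀ ∈ Finset.Icc 1 φ)
    (X : ℕ → Ω → ℕ)
    (hstart : ∀ᵐ ω ∂μ, X 0 ω = x₀)
    (hmarkov : ∀ (t : ℕ) (h : ℕ → ℕ) (y : ℕ),
      μ {ω | (∀ s ≤ t, X s ω = h s) ∧ X (t + 1) ω = y}
        = ENNReal.ofReal (paramHSTransProb φ f (h t) y)
            * μ {ω | ∀ s ≤ t, X s ω = h s}) :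
    ∫⁻ ω, (⨅ (t : ℕ) (_ : X t ω = xstar), (t : ENNReal)) ∂μ
      ≤ ENNReal.ofReal (4 * α * harmonicNumberPred φ * Real.logb 2 (φ : ℝ)
          + 4 * α * (β : ℝ) * harmonicNumberPred φ) := by
  classical
  -- drift inequality in `ℝ≥0∞`
  have hdriftE : ∀ w ∈ (Finset.Icc 1 φ).erase xstar,
      (∑ y ∈ (Finset.Icc 1 φ).erase xstar,
          ENNReal.ofReal (paramHSTransProb φ f w y)
            * ENNReal.ofReal (Vfun φ f xstar α β y)) + 1
        ≤ ENNReal.ofReal (Vfun φ f xstar α β w) := by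
    intro w hw
    have hreal := drift_main hφ hxs hmin hα hβ1 hβφ huni hw
    have h0 : ∀ y ∈ (Finset.Icc 1 φ).erase xstar,
        0 ≤ paramHSTransProb φ f w y * Vfun φ f xstar α β y :=
      fun y _ => mul_nonneg (paramHSTransProb_nonneg hφ f w y) (Vfun_nonneg y)
    have e : ENNReal.ofReal (∑ y ∈ (Finset.Icc 1 φ).erase xstar,
          paramHSTransProb φ f w y * Vfun φ f xstar α β y + 1)
        = (∑ y ∈ (Finset.Icc 1 φ).erase xstar,
            ENNReal.ofReal (paramHSTransProb φ f w y)
              * ENNReal.ofReal (Vfun φ f xstar α β y)) + 1 := by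
      rw [ENNReal.ofReal_add (Finset.sum_nonneg h0) zero_le_one, ENNReal.ofReal_one,
        ENNReal.ofReal_sum_of_nonneg h0]
      congr 1
      exact Finset.sum_congr rfl fun y _ =>
        ENNReal.ofReal_mul (paramHSTransProb_nonneg hφ f w y)
    rw [← e]
    exact ENNReal.ofReal_le_ofReal hreal
  -- one-step supermartingale inequality
  have hstep : ∀ t : ℕ, μ {ω | ∀ s ≤ t, X s ω ≠ xstar}
      + ∑ x ∈ (Finset.Icc 1 φ).erase xstar,
          aFun μ X φ xstar x₀ (t+1) x * ENNReal.ofReal (Vfun φ f xstar α β x)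
      ≤ ∑ x ∈ (Finset.Icc 1 φ).erase xstar,
          aFun μ X φ xstar x₀ t x * ENNReal.ofReal (Vfun φ f xstar α β x) := by
    intro t
    have h2 := measure_avoid_le μ φ f X xstar x₀ hx₀ hstart hmarkov t
    have h1 : ∑ x ∈ (Finset.Icc 1 φ).erase xstar,
          aFun μ X φ xstar x₀ (t+1) x * ENNReal.ofReal (Vfun φ f xstar α β x)
        ≤ ∑ w ∈ (Finset.Icc 1 φ).erase xstar, aFun μ X φ xstar x₀ t w
            * (∑ y ∈ (Finset.Icc 1 φ).erase xstar,
                ENNReal.ofReal (paramHSTransProb φ f w y)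
                  * ENNReal.ofReal (Vfun φ f xstar α β y)) := by
      calc ∑ x ∈ (Finset.Icc 1 φ).erase xstar,
            aFun μ X φ xstar x₀ (t+1) x * ENNReal.ofReal (Vfun φ f xstar α β x)
          ≤ ∑ x ∈ (Finset.Icc 1 φ).erase xstar,
              (∑ w ∈ (Finset.Icc 1 φ).erase xstar,
                ENNReal.ofReal (paramHSTransProb φ f w x) * aFun μ X φ xstar x₀ t w)
                * ENNReal.ofReal (Vfun φ f xstar α β x) :=
            Finset.sum_le_sum fun x _ =>
              mul_le_mul_left (aFun_succ_le μ φ f X xstar x₀ hmarkov t x) _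
        _ = ∑ x ∈ (Finset.Icc 1 φ).erase xstar, ∑ w ∈ (Finset.Icc 1 φ).erase xstar,
              (ENNReal.ofReal (paramHSTransProb φ f w x) * aFun μ X φ xstar x₀ t w)
                * ENNReal.ofReal (Vfun φ f xstar α β x) :=
            Finset.sum_congr rfl fun x _ => Finset.sum_mul _ _ _
        _ = ∑ w ∈ (Finset.Icc 1 φ).erase xstar, ∑ x ∈ (Finset.Icc 1 φ).erase xstar,
              (ENNReal.ofReal (paramHSTransProb φ f w x) * aFun μ X φ xstar x₀ t w)
                * ENNReal.ofReal (Vfun φ f xstar α β x) := Finset.sum_comm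
        _ = ∑ w ∈ (Finset.Icc 1 φ).erase xstar, aFun μ X φ xstar x₀ t w
              * (∑ y ∈ (Finset.Icc 1 φ).erase xstar,
                  ENNReal.ofReal (paramHSTransProb φ f w y)
                    * ENNReal.ofReal (Vfun φ f xstar α β y)) := by
            refine Finset.sum_congr rfl fun w _ => ?_
            rw [Finset.mul_sum]
            refine Finset.sum_congr rfl fun y _ => ?_
            ring
    calc μ {ω | ∀ s ≤ t, X s ω ≠ xstar}
          + ∑ x ∈ (Finset.Icc 1 φ).erase xstar,
              aFun μ X φ xstar x₀ (t+1) x * ENNReal.ofReal (Vfun φ f xstar α β x)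
        ≤ (∑ w ∈ (Finset.Icc 1 φ).erase xstar, aFun μ X φ xstar x₀ t w)
          + ∑ w ∈ (Finset.Icc 1 φ).erase xstar, aFun μ X φ xstar x₀ t w
              * (∑ y ∈ (Finset.Icc 1 φ).erase xstar,
                  ENNReal.ofReal (paramHSTransProb φ f w y)
                    * ENNReal.ofReal (Vfun φ f xstar α β y)) := add_le_add h2 h1
      _ = ∑ w ∈ (Finset.Icc 1 φ).erase xstar,
            (aFun μ X φ xstar x₀ t w + aFun μ X φ xstar x₀ t w
              * (∑ y ∈ (Finset.Icc 1 φ).erase xstar,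
                  ENNReal.ofReal (paramHSTransProb φ f w y)
                    * ENNReal.ofReal (Vfun φ f xstar α β y))) :=
          Finset.sum_add_distrib.symm
      _ = ∑ w ∈ (Finset.Icc 1 φ).erase xstar, aFun μ X φ xstar x₀ t w
            * ((∑ y ∈ (Finset.Icc 1 φ).erase xstar,
                ENNReal.ofReal (paramHSTransProb φ f w y)
                  * ENNReal.ofReal (Vfun φ f xstar α β y)) + 1) := by
          refine Finset.sum_congr rfl fun w _ => ?_
          rw [mul_add, mul_one, add_comm]
      _ ≤ ∑ w ∈ (Finset.Icc 1 φ).erase xstar,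
            aFun μ X φ xstar x₀ t w * ENNReal.ofReal (Vfun φ f xstar α β w) :=
          Finset.sum_le_sum fun w hw => mul_le_mul_right (hdriftE w hw) _
  -- telescoping
  have hpartial : ∀ n : ℕ, (∑ t ∈ Finset.range n, μ {ω | ∀ s ≤ t, X s ω ≠ xstar})
      + ∑ x ∈ (Finset.Icc 1 φ).erase xstar,
          aFun μ X φ xstar x₀ n x * ENNReal.ofReal (Vfun φ f xstar α β x)
      ≤ ∑ x ∈ (Finset.Icc 1 φ).erase xstar,
          aFun μ X φ xstar x₀ 0 x * ENNReal.ofReal (Vfun φ f xstar α β x) := by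
    intro n
    induction n with
    | zero => simp
    | succ n ih =>
      calc (∑ t ∈ Finset.range (n+1), μ {ω | ∀ s ≤ t, X s ω ≠ xstar})
            + ∑ x ∈ (Finset.Icc 1 φ).erase xstar,
                aFun μ X φ xstar x₀ (n+1) x * ENNReal.ofReal (Vfun φ f xstar α β x)
          = (∑ t ∈ Finset.range n, μ {ω | ∀ s ≤ t, X s ω ≠ xstar})
            + (μ {ω | ∀ s ≤ n, X s ω ≠ xstar}
              + ∑ x ∈ (Finset.Icc 1 φ).erase xstar,
                  aFun μ X φ xstar x₀ (n+1) x * ENNReal.ofReal (Vfun φ f xstar α β x)) := by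
            rw [Finset.sum_range_succ, add_assoc]
        _ ≤ (∑ t ∈ Finset.range n, μ {ω | ∀ s ≤ t, X s ω ≠ xstar})
            + ∑ x ∈ (Finset.Icc 1 φ).erase xstar,
                aFun μ X φ xstar x₀ n x * ENNReal.ofReal (Vfun φ f xstar α β x) :=
            add_le_add_right (hstep n) _
        _ ≤ _ := ih
  -- the initial value of the potential
  have ha0 : ∀ x ∈ (Finset.Icc 1 φ).erase xstar, x ≠ x₀ → aFun μ X φ xstar x₀ 0 x = 0 := by
    intro x _ hne
    have hz : ∀ h : Fin (0+1) → ℕ,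
        (GoodTraj φ xstar x₀ 0 x).indicator (trajProb μ X 0) h = 0 := by
      intro h
      rw [Set.indicator_of_notMem]
      rintro ⟨h0, -, hlast⟩
      apply hne
      have hl0 : (Fin.last 0) = (0 : Fin (0+1)) := Fin.ext rfl
      rw [hl0] at hlast
      rw [← hlast]; exact h0
    simp only [aFun, hz, tsum_zero]
  have ha01 : aFun μ X φ xstar x₀ 0 x₀ ≤ 1 := by
    have hsub : GoodTraj φ xstar x₀ 0 x₀ ⊆ {(fun _ => x₀ : Fin (0+1) → ℕ)} := by
      rintro h ⟨h0, -, -⟩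
      have : h = fun _ => x₀ := by
        funext s
        have hs0 : s = 0 := by
          apply Fin.ext
          have := s.isLt
          omega
        rw [hs0]; exact h0
      exact this
    calc aFun μ X φ xstar x₀ 0 x₀
        ≤ ∑' h : Fin (0+1) → ℕ,
            ({(fun _ => x₀ : Fin (0+1) → ℕ)} : Set _).indicator (trajProb μ X 0) h := by
          simp only [aFun]
          exact ENNReal.tsum_le_tsum fun h =>
            Set.indicator_le_indicator_of_subset hsub (fun _ => zero_le) h
      _ = trajProb μ X 0 (fun _ => x₀) := by
          rw [← tsum_subtype]
          exact tsum_singleton _ _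
      _ ≤ 1 := prob_le_one
  have hc0 : ∑ x ∈ (Finset.Icc 1 φ).erase xstar,
      aFun μ X φ xstar x₀ 0 x * ENNReal.ofReal (Vfun φ f xstar α β x)
      ≤ ENNReal.ofReal (Vfun φ f xstar α β x₀) := by
    calc ∑ x ∈ (Finset.Icc 1 φ).erase xstar,
          aFun μ X φ xstar x₀ 0 x * ENNReal.ofReal (Vfun φ f xstar α β x)
        ≤ ∑ x ∈ (Finset.Icc 1 φ).erase xstar,
            (if x = x₀ then ENNReal.ofReal (Vfun φ f xstar α β x₀) else 0) := by
          refine Finset.sum_le_sum fun x hx => ?_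
          by_cases hxx : x = x₀
          · rw [if_pos hxx, hxx]
            calc aFun μ X φ xstar x₀ 0 x₀ * ENNReal.ofReal (Vfun φ f xstar α β x₀)
                ≤ 1 * ENNReal.ofReal (Vfun φ f xstar α β x₀) := mul_le_mul_left ha01 _
              _ = ENNReal.ofReal (Vfun φ f xstar α β x₀) := one_mul _
          · rw [if_neg hxx, ha0 x hx hxx, zero_mul]
      _ ≤ ENNReal.ofReal (Vfun φ f xstar α β x₀) := by
          rw [Finset.sum_ite_eq' ((Finset.Icc 1 φ).erase xstar) x₀
            (fun _ => ENNReal.ofReal (Vfun φ f xstar α β x₀))]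
          split_ifs <;> simp
  -- summing up the avoidance probabilities
  have htsum : (∑' t : ℕ, μ {ω | ∀ s ≤ t, X s ω ≠ xstar})
      ≤ ENNReal.ofReal (Vfun φ f xstar α β x₀) := by
    rw [ENNReal.tsum_eq_iSup_sum]
    refine iSup_le fun s => ?_
    obtain ⟨n, hn⟩ := Finset.exists_nat_subset_range s
    calc ∑ t ∈ s, μ {ω | ∀ s ≤ t, X s ω ≠ xstar}
        ≤ ∑ t ∈ Finset.range n, μ {ω | ∀ s ≤ t, X s ω ≠ xstar} :=
          Finset.sum_le_sum_of_subset hn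
      _ ≤ ∑ x ∈ (Finset.Icc 1 φ).erase xstar,
            aFun μ X φ xstar x₀ 0 x * ENNReal.ofReal (Vfun φ f xstar α β x) :=
          le_trans le_self_add (hpartial n)
      _ ≤ _ := hc0
  -- bounding the hitting time by the avoidance indicators
  have hTle : ∀ ω : Ω, (⨅ (t : ℕ) (_ : X t ω = xstar), (t : ENNReal))
      ≤ ∑' t : ℕ, (toMeasurable μ {ω' | ∀ s ≤ t, X s ω' ≠ xstar}).indicator
          (fun _ => (1:ENNReal)) ω := by
    intro ω
    have hmono : ∀ t : ℕ,
        ({ω' | ∀ s ≤ t, X s ω' ≠ xstar} : Set Ω).indicator (fun _ => (1:ENNReal)) ω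
          ≤ (toMeasurable μ {ω' | ∀ s ≤ t, X s ω' ≠ xstar}).indicator
              (fun _ => (1:ENNReal)) ω :=
      fun t => Set.indicator_le_indicator_of_subset (subset_toMeasurable μ _)
        (fun _ => zero_le) ω
    refine le_trans ?_ (ENNReal.tsum_le_tsum hmono)
    by_cases hhit : ∃ t, X t ω = xstar
    · have hm := Nat.find_spec hhit
      have h1 : (⨅ (t : ℕ) (_ : X t ω = xstar), (t : ENNReal))
          ≤ ((Nat.find hhit : ℕ) : ENNReal) :=
        iInf₂_le (f := fun (t : ℕ) (_ : X t ω = xstar) => (t : ENNReal)) (Nat.find hhit) hm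
      refine le_trans h1 ?_
      have h2 : ∀ t, t < Nat.find hhit → ω ∈ {ω' | ∀ s ≤ t, X s ω' ≠ xstar} := by
        intro t ht s hs
        exact Nat.find_min hhit (lt_of_le_of_lt hs ht)
      calc ((Nat.find hhit : ℕ) : ENNReal)
          = ∑ t ∈ Finset.range (Nat.find hhit),
              ({ω' | ∀ s ≤ t, X s ω' ≠ xstar} : Set Ω).indicator (fun _ => (1:ENNReal)) ω := by
            rw [Finset.sum_congr rfl fun t ht =>
              Set.indicator_of_mem (h2 t (Finset.mem_range.1 ht)) (fun _ => (1:ENNReal))]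
            simp
        _ ≤ ∑' t : ℕ, ({ω' | ∀ s ≤ t, X s ω' ≠ xstar} : Set Ω).indicator
              (fun _ => (1:ENNReal)) ω := ENNReal.sum_le_tsum _
    · push_neg at hhit
      have hall : ∀ t : ℕ, ω ∈ {ω' | ∀ s ≤ t, X s ω' ≠ xstar} := fun t s _ => hhit s
      have htop : (∑' t : ℕ, ({ω' | ∀ s ≤ t, X s ω' ≠ xstar} : Set Ω).indicator
          (fun _ => (1:ENNReal)) ω) = ⊤ := by
        rw [tsum_congr fun t => Set.indicator_of_mem (hall t) (fun _ => (1:ENNReal))]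
        exact ENNReal.tsum_const_eq_top_of_ne_zero one_ne_zero
      rw [htop]
      exact le_top
  have hint : ∫⁻ ω, (⨅ (t : ℕ) (_ : X t ω = xstar), (t : ENNReal)) ∂μ
      ≤ ∑' t : ℕ, μ {ω | ∀ s ≤ t, X s ω ≠ xstar} := by
    calc ∫⁻ ω, (⨅ (t : ℕ) (_ : X t ω = xstar), (t : ENNReal)) ∂μ
        ≤ ∫⁻ ω, ∑' t : ℕ, (toMeasurable μ {ω' | ∀ s ≤ t, X s ω' ≠ xstar}).indicator
            (fun _ => (1:ENNReal)) ω ∂μ := lintegral_mono hTle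
      _ = ∑' t : ℕ, ∫⁻ ω, (toMeasurable μ {ω' | ∀ s ≤ t, X s ω' ≠ xstar}).indicator
            (fun _ => (1:ENNReal)) ω ∂μ :=
          lintegral_tsum fun t =>
            (measurable_const.indicator (measurableSet_toMeasurable μ _)).aemeasurable
      _ = ∑' t : ℕ, μ {ω | ∀ s ≤ t, X s ω ≠ xstar} := by
          refine tsum_congr fun t => ?_
          rw [lintegral_indicator_const (measurableSet_toMeasurable μ _), one_mul,
            measure_toMeasurable]
  refine le_trans hint (le_trans htsum ?_)
  have hb := Vfun_le_bound (f := f) (β := β) hφ hα hxs x₀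
  exact ENNReal.ofReal_le_ofReal (by linarith)
end
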